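/- arXiv:2510.04310 — 4 statements merged into one kernel-verified Lean document; each statement's English description precedes it below -/
import Mathlib

section
/- Let n and f be natural numbers with n > 3f, let ι and V be types, let I be a finset of ι with |I| = n − f, and let g : ι → V be a value assignment. If v and w are values such that the number of i ∈ I with g i = v is at least |I| − f and the number of i ∈ I with g i = w is at least |I| − f, then v = w. -/
theorem unique_majority_value {n f : ℕ} (hnf : n > 3 * f)
    {ι V : Type*} [DecidableEq V]
    (I : Finset ι) (hI : I.card = n - f) (g : ι → V) (v w : V)
    (hv : I.card - f ≤ (I.filter (fun i => g i = v)).card)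
    (hw : I.card - f ≤ (I.filter (fun i => g i = w)).card) :
    v = w := by
  classical
  by_contra h
  have hdisj : Disjoint (I.filter (fun i => g i = v)) (I.filter (fun i => g i = w)) := by
    simp only [Finset.disjoint_left, Finset.mem_filter]
    rintro a ⟨_, hav⟩ ⟨_, haw⟩
    exact h (hav ▸ haw)
  have hsub : I.filter (fun i => g i = v) ∪ I.filter (fun i => g i = w) ⊆ I :=
    Finset.union_subset (Finset.filter_subset _ _) (Finset.filter_subset _ _)
  have hcard := Finset.card_le_card hsub
  rw [Finset.card_union_of_disjoint hdisj] at hcard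
  omega
end

section
/- Let n and f be natural numbers with n > 3f, let ι and V be types, let I, A, B be finsets of ι with I ⊆ A, I ⊆ B, and |I| = n − f, and let g : ι → V be a value assignment. If v and w are values such that the number of i ∈ A with g i = v is at least |A| − f and the number of i ∈ B with g i = w is at least |B| − f, then v = w. -/
theorem crusader_agreement_from_gather {n f : ℕ} (hnf : n > 3 * f)
    {ι V : Type*} [DecidableEq V]
    (I A B : Finset ι) (hIA : I ⊆ A) (hIB : I ⊆ B) (hI : I.card = n - f)
    (g : ι → V) (v w : V)
    (hv : A.card - f ≤ (A.filter (fun i => g i = v)).card)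
    (hw : B.card - f ≤ (B.filter (fun i => g i = w)).card) :
    v = w := by
  -- bad elements in A (≠ v) are at most f
  have hAbad : (A.filter (fun i => ¬ g i = v)).card ≤ f := by
    have h := Finset.card_filter_add_card_filter_not
      (s := A) (p := fun i => g i = v)
    omega
  have hBbad : (B.filter (fun i => ¬ g i = w)).card ≤ f := by
    have h := Finset.card_filter_add_card_filter_not
      (s := B) (p := fun i => g i = w)
    omega
  have hIv : (I.filter (fun i => ¬ g i = v)).card ≤ f :=
    le_trans (Finset.card_le_card (Finset.filter_subset_filter _ hIA)) hAbad
  have hIw : (I.filter (fun i => ¬ g i = w)).card ≤ f :=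
    le_trans (Finset.card_le_card (Finset.filter_subset_filter _ hIB)) hBbad
  have hIv' : n - 2 * f ≤ (I.filter (fun i => g i = v)).card := by
    have h := Finset.card_filter_add_card_filter_not
      (s := I) (p := fun i => g i = v)
    omega
  have hIw' : n - 2 * f ≤ (I.filter (fun i => g i = w)).card := by
    have h := Finset.card_filter_add_card_filter_not
      (s := I) (p := fun i => g i = w)
    omega
  have hsub : ((I.filter (fun i => g i = v)).filter (fun i => ¬ g i = w)).card ≤ f :=
    le_trans (Finset.card_le_card (Finset.filter_subset_filter _ (Finset.filter_subset _ _))) hIw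
  have hsplit := Finset.card_filter_add_card_filter_not
    (s := I.filter (fun i => g i = v)) (p := fun i => g i = w)
  have hpos : 0 < ((I.filter (fun i => g i = v)).filter (fun i => g i = w)).card := by omega
  obtain ⟨i, hi⟩ := Finset.card_pos.mp hpos
  simp only [Finset.mem_filter] at hi
  rw [← hi.1.2, hi.2]
end

section
/- Let n and f be natural numbers with n > 4f, let V be a type, let A and B be finsets of Fin n with |A| ≥ n − f and |B| ≥ n − f, and let g : Fin n → V be a value assignment. If v and w are values such that the number of i ∈ A with g i = v is at least |A| − f and the number of i ∈ B with g i = w is at least |B| − f, then v = w. -/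
theorem crusader_agreement_from_rbcast {n f : ℕ} (hnf : n > 4 * f)
    {V : Type*} [DecidableEq V]
    (A B : Finset (Fin n)) (hA : n - f ≤ A.card) (hB : n - f ≤ B.card)
    (g : Fin n → V) (v w : V)
    (hv : A.card - f ≤ (A.filter (fun i => g i = v)).card)
    (hw : B.card - f ≤ (B.filter (fun i => g i = w)).card) :
    v = w := by
  set Av := A.filter (fun i => g i = v) with hAv
  set Bw := B.filter (fun i => g i = w) with hBw
  have hcardA : A.card ≤ n := by simpa using A.card_le_univ
  have hcardB : B.card ≤ n := by simpa using B.card_le_univ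
  have hunion : (Av ∪ Bw).card ≤ n := by simpa using (Av ∪ Bw).card_le_univ
  have hie := Finset.card_inter_add_card_union Av Bw
  have hne : (Av ∩ Bw).Nonempty := by
    rw [← Finset.card_pos]
    omega
  obtain ⟨i, hi⟩ := hne
  simp only [Finset.mem_inter, hAv, hBw, Finset.mem_filter] at hi
  rw [← hi.1.2, ← hi.2.2]
end

section
/- Let n and f be natural numbers with n > 3f, let V be a type, let F be a finset of Fin n with |F| ≤ f, let A be a finset of Fin n with |A| ≥ n − f, let g : Fin n → V, and let v : V be such that g i = v for every i ∈ A \ F. Then for any value w, if the number of i ∈ A with g i = w is at least |A| − f, then w = v. -/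
theorem validity_from_gather {n f : ℕ} (hnf : n > 3 * f)
    {V : Type*} [DecidableEq V]
    (F : Finset (Fin n)) (hF : F.card ≤ f)
    (A : Finset (Fin n)) (hA : n - f ≤ A.card)
    (g : Fin n → V) (v : V) (hv : ∀ i ∈ A \ F, g i = v) :
    ∀ w : V, A.card - f ≤ (A.filter (fun i => g i = w)).card → w = v := by
  intro w hw
  by_contra hne
  have hsub : A.filter (fun i => g i = w) ⊆ F := by
    intro i hi
    simp only [Finset.mem_filter] at hi
    by_contra hiF
    exact hne (hi.2 ▸ hv i (Finset.mem_sdiff.mpr ⟨hi.1, hiF⟩))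
  have := Finset.card_le_card hsub
  omega
end
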